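/- The Independent Markets mechanism is at least 0.6862-approximate for three projects: for every n ≥ 2·10^4, there exists a preference profile V of n voters over 3 projects on which the ℓ1-loss of the Independent Markets mechanism is at least 0.6862. Concretely, with ρ = 2 − √2, the profile in which ⌊nρ⌋ voters propose (1,0,0) and ⌈n(1−ρ)⌉ voters propose (√2 − 1, 1 − √2/2, 1 − √2/2) has loss (3 − 2√2)(1 − ⌈n(1−ρ)⌉/n) + ⌊nρ⌋/n ≥ 0.6862. -/

import Mathlib

open Finset

/-- A division among `m` projects: coordinates in `[0,1]` summing to `1`. -/
def IsDivision {m : ℕ} (x : Fin m → ℝ) : Prop :=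
  (∀ j, 0 ≤ x j ∧ x j ≤ 1) ∧ ∑ j, x j = 1

/-- The ℓ1 distance between two vectors over `Fin m`. -/
noncomputable def l1 {m : ℕ} (x y : Fin m → ℝ) : ℝ := ∑ j, |x j - y j|

/-- The proportional division (coordinatewise mean) of a profile. -/
noncomputable def propDiv {n m : ℕ} (V : Fin n → Fin m → ℝ) : Fin m → ℝ :=
  fun j => (∑ i, V i j) / (n : ℝ)

/-- The `(k+1)`-th smallest element of a multiset of reals. -/
noncomputable def medianAt (s : Multiset ℝ) (k : ℕ) : ℝ :=
  (s.sort (· ≤ ·)).getD k 0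

/-- Voter reports on project `j` together with the `n+1` phantom values `p 0, …, p n`. -/
noncomputable def projValues {n m : ℕ} (V : Fin n → Fin m → ℝ)
    (p : ℕ → ℝ) (j : Fin m) : Multiset ℝ :=
  (Multiset.map (fun i => V i j) Finset.univ.val) +
    (Multiset.map p (Finset.range (n + 1)).val)

/-- The median (the `(n+1)`-th smallest of the `2n+1` values) of the `n` voter reports
on project `j` together with the `n+1` phantom values. -/
noncomputable def phantomMedian {n m : ℕ} (V : Fin n → Fin m → ℝ)
    (p : ℕ → ℝ) (j : Fin m) : ℝ :=
  medianAt (projValues V p j) n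

/-- A phantom system for `n` voters: continuous, weakly increasing functions
`y k : [0,1] → [0,1]`, `k = 0, …, n`, with `y k 0 = 0`, `y k 1 = 1`,
pointwise ordered in `k`. -/
structure PhantomSystem (n : ℕ) where
  y : ℕ → ℝ → ℝ
  contOn : ∀ k ≤ n, ContinuousOn (y k) (Set.Icc 0 1)
  monoOn : ∀ k ≤ n, MonotoneOn (y k) (Set.Icc 0 1)
  mem_Icc : ∀ k ≤ n, ∀ t ∈ Set.Icc (0:ℝ) 1, y k t ∈ Set.Icc (0:ℝ) 1
  map_zero : ∀ k ≤ n, y k 0 = 0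
  map_one : ∀ k ≤ n, y k 1 = 1
  mono_idx : ∀ t ∈ Set.Icc (0:ℝ) 1, ∀ k k', k ≤ k' → k' ≤ n → y k t ≤ y k' t

/-- `f` is the moving phantom mechanism associated with the phantom system `Y`:
on each profile of divisions, for some `t*` making the medians sum to `1`,
it outputs on each project the median of the voter reports and the phantom values. -/
def IsMovingPhantom {n m : ℕ} (f : (Fin n → Fin m → ℝ) → (Fin m → ℝ))
    (Y : PhantomSystem n) : Prop :=
  ∀ V : Fin n → Fin m → ℝ, (∀ i, IsDivision (V i)) →
    ∃ t ∈ Set.Icc (0:ℝ) 1,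
      (∑ j, phantomMedian V (fun k => Y.y k t) j) = 1 ∧
      ∀ j, f V j = phantomMedian V (fun k => Y.y k t) j

/-- Truthfulness of a budget aggregation mechanism: no voter `i` with true peak `V i`
can get an outcome closer (in ℓ1 distance) to her peak by reporting some division `v`
instead of `V i`. -/
def Truthful {n m : ℕ} (f : (Fin n → Fin m → ℝ) → (Fin m → ℝ)) : Prop :=
  ∀ V : Fin n → Fin m → ℝ, (∀ i, IsDivision (V i)) →
    ∀ i : Fin n, ∀ v : Fin m → ℝ, IsDivision v →
      l1 (f V) (V i) ≤ l1 (f (Function.update V i v)) (V i)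

/-- The ℓ1-loss of mechanism `f` on profile `V`. -/
noncomputable def loss {n m : ℕ} (f : (Fin n → Fin m → ℝ) → (Fin m → ℝ))
    (V : Fin n → Fin m → ℝ) : ℝ :=
  l1 (f V) (propDiv V)

/-- The phantom system of the Piecewise Uniform mechanism for `n` voters. -/
noncomputable def puPhantom (n : ℕ) (k : ℕ) (t : ℝ) : ℝ :=
  if t < 1 / 2 then
    (if (k : ℝ) / (n : ℝ) < 1 / 2 then 0 else 4 * t * (k : ℝ) / (n : ℝ) - 2 * t)
  else
    (if (k : ℝ) / (n : ℝ) < 1 / 2 then (k : ℝ) * (2 * t - 1) / (n : ℝ)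
     else (k : ℝ) * (3 - 2 * t) / (n : ℝ) - 2 + 2 * t)

/-- `w` is an output of the Piecewise Uniform mechanism on profile `V`. -/
def IsPUOutcome {n m : ℕ} (V : Fin n → Fin m → ℝ) (w : Fin m → ℝ) : Prop :=
  ∃ t ∈ Set.Icc (0:ℝ) 1,
    (∑ j, phantomMedian V (fun k => puPhantom n k t) j) = 1 ∧
    ∀ j, w j = phantomMedian V (fun k => puPhantom n k t) j

/-- `w` is an output of the Independent Markets mechanism (phantoms `min (k·t) 1`)
on profile `V`. -/
def IsIMOutcome {n m : ℕ} (V : Fin n → Fin m → ℝ) (w : Fin m → ℝ) : Prop :=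
  ∃ t : ℝ, 0 ≤ t ∧
    (∑ j, phantomMedian V (fun k => min ((k : ℝ) * t) 1) j) = 1 ∧
    ∀ j, w j = phantomMedian V (fun k => min ((k : ℝ) * t) 1) j

/-- A single-minded division: it assigns the whole budget to one project. -/
def SingleMindedDiv {m : ℕ} (v : Fin m → ℝ) : Prop := ∃ j, v j = 1

/-- A double-minded division relative to an outcome `w` (three projects): it agrees with
`w` on one project `j`, proposes `1 - w j` on another project, and `0` on the third. -/
def DoubleMindedDiv (w v : Fin 3 → ℝ) : Prop :=
  ∃ j j' : Fin 3, j ≠ j' ∧ v j = w j ∧ v j' = 1 - w j ∧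
    ∀ k, k ≠ j → k ≠ j' → v k = 0

/-- A three-type profile for mechanism `f`: each voter is fully-satisfied,
double-minded, or single-minded. -/
def ThreeTypeProfile {n : ℕ} (f : (Fin n → Fin 3 → ℝ) → (Fin 3 → ℝ))
    (V : Fin n → Fin 3 → ℝ) : Prop :=
  ∀ i, V i = f V ∨ DoubleMindedDiv (f V) (V i) ∨ SingleMindedDiv (V i)

/-- The single-minded division fully supporting project `j`. -/
noncomputable def singleDiv (j : Fin 3) : Fin 3 → ℝ :=
  fun j' => if j' = j then 1 else 0

/-- The double-minded division proposing `x k` on project `k`, `1 - x k` on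
project `j` and `0` on the remaining project. -/
noncomputable def doubleDiv (x : Fin 3 → ℝ) (k j : Fin 3) : Fin 3 → ℝ :=
  fun j' => if j' = k then x k else if j' = j then 1 - x k else 0

/-- A utilitarian mechanism: it always returns a division minimizing the total
ℓ1 distance (social cost) to the voters' proposals. -/
def Utilitarian {n m : ℕ} (f : (Fin n → Fin m → ℝ) → (Fin m → ℝ)) : Prop :=
  ∀ V : Fin n → Fin m → ℝ, (∀ i, IsDivision (V i)) →
    IsDivision (f V) ∧
    ∀ x : Fin m → ℝ, IsDivision x → (∑ i, l1 (V i) (f V)) ≤ ∑ i, l1 (V i) x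


/-- The lower-bound profile for the Independent Markets mechanism: with
`ρ = 2 - √2`, `⌊nρ⌋` voters propose `(1,0,0)` and the remaining
`⌈n(1-ρ)⌉` voters propose `(√2 - 1, 1 - √2/2, 1 - √2/2)`. -/
noncomputable def imProfile (n : ℕ) : Fin n → Fin 3 → ℝ :=
  fun i j =>
    if (i : ℕ) < Nat.floor ((n : ℝ) * (2 - Real.sqrt 2)) then
      (if (j : ℕ) = 0 then 1 else 0)
    else
      (if (j : ℕ) = 0 then Real.sqrt 2 - 1 else 1 - Real.sqrt 2 / 2)

lemma sorted_getElem_le {L : List ℝ} (hs : L.Pairwise (· ≤ ·)) {k : ℕ} {v : ℝ}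
    (h : k + 1 ≤ L.countP (fun x => decide (x ≤ v))) : L.getD k 0 ≤ v := by
  have hk : k < L.length := by
    have := L.countP_le_length (p := fun x => decide (x ≤ v))
    omega
  rw [List.getD_eq_getElem L 0 hk]
  by_contra hlt
  push_neg at hlt
  have hdrop : (L.drop k).countP (fun x => decide (x ≤ v)) = 0 := by
    rw [List.countP_eq_zero]
    intro a ha
    obtain ⟨m, hm, rfl⟩ := List.mem_iff_getElem.mp ha
    rw [List.getElem_drop]
    simp only [decide_eq_true_eq, not_le]
    refine lt_of_lt_of_le hlt ?_
    rcases Nat.eq_zero_or_pos m with rfl | hm0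
    · simp
    · exact (List.pairwise_iff_getElem.mp hs) k (k+m) hk (by
        have := hm; rw [List.length_drop] at this; omega) (by omega)
  have := List.countP_append (p := fun x => decide (x ≤ v)) (l₁ := L.take k) (l₂ := L.drop k)
  rw [List.take_append_drop] at this
  have h2 : (L.take k).countP (fun x => decide (x ≤ v)) ≤ k := by
    have := List.countP_le_length (p := fun x => decide (x ≤ v)) (l := L.take k)
    simp [List.length_take] at this
    omega
  omega

lemma le_sorted_getElem {L : List ℝ} (hs : L.Pairwise (· ≤ ·)) {k : ℕ} {v : ℝ}
    (hk : k < L.length)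
    (h : L.countP (fun x => decide (x < v)) ≤ k) : v ≤ L.getD k 0 := by
  rw [List.getD_eq_getElem L 0 hk]
  by_contra hlt
  push_neg at hlt
  have htake : (L.take (k+1)).countP (fun x => decide (x < v)) = k + 1 := by
    have hlen : (L.take (k+1)).length = k + 1 := by
      rw [List.length_take]; omega
    have hall : ∀ a ∈ L.take (k+1), decide (a < v) = true := by
      intro a ha
      obtain ⟨m, hm, rfl⟩ := List.mem_iff_getElem.mp ha
      rw [hlen] at hm
      rw [List.getElem_take]
      simp only [decide_eq_true_eq]
      rcases Nat.lt_or_ge m k with hmk | hmk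
      · exact lt_of_le_of_lt ((List.pairwise_iff_getElem.mp hs) m k (by omega) hk hmk) hlt
      · have : m = k := by omega
        subst this; exact hlt
    rw [List.countP_eq_length.mpr hall, hlen]
  have := List.countP_append (p := fun x => decide (x < v)) (l₁ := L.take (k+1)) (l₂ := L.drop (k+1))
  rw [List.take_append_drop] at this
  omega

lemma medianAt_le {s : Multiset ℝ} {k : ℕ} {v : ℝ}
    (h : k + 1 ≤ Multiset.countP (fun x => x ≤ v) s) : medianAt s k ≤ v := by
  have hs := Multiset.pairwise_sort (α := ℝ) s (· ≤ ·)
  have he : (↑(s.sort (· ≤ ·)) : Multiset ℝ) = s := Multiset.sort_eq s _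
  rw [← he, Multiset.coe_countP] at h
  exact sorted_getElem_le hs h

lemma le_medianAt {s : Multiset ℝ} {k : ℕ} {v : ℝ} (hk : k < Multiset.card s)
    (h : Multiset.countP (fun x => x < v) s ≤ k) : v ≤ medianAt s k := by
  have hs := Multiset.pairwise_sort (α := ℝ) s (· ≤ ·)
  have he : (↑(s.sort (· ≤ ·)) : Multiset ℝ) = s := Multiset.sort_eq s _
  rw [← he, Multiset.coe_countP] at h
  rw [← Multiset.length_sort (s := s) (r := (· ≤ ·))] at hk
  exact le_sorted_getElem hs hk h

lemma medianAt_eq {s : Multiset ℝ} {k : ℕ} {v : ℝ} (hk : k < Multiset.card s)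
    (h1 : k + 1 ≤ Multiset.countP (fun x => x ≤ v) s)
    (h2 : Multiset.countP (fun x => x < v) s ≤ k) : medianAt s k = v :=
  le_antisymm (medianAt_le h1) (le_medianAt hk h2)

lemma card_filter_fin_lt {n a : ℕ} (h : a ≤ n) :
    ((univ : Finset (Fin n)).filter (fun i : Fin n => (i : ℕ) < a)).card = a := by
  have he : (univ : Finset (Fin n)).filter (fun i : Fin n => (i : ℕ) < a)
      = Finset.map (Fin.castLEEmb h) univ := by
    ext i
    simp only [mem_filter, mem_univ, true_and, Finset.mem_map, Fin.castLEEmb_apply]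
    constructor
    · intro hi; exact ⟨⟨i, hi⟩, rfl⟩
    · rintro ⟨j, rfl⟩; exact j.2
  rw [he, Finset.card_map, Finset.card_univ, Fintype.card_fin]

lemma card_filter_fin_not_lt {n a : ℕ} (h : a ≤ n) :
    ((univ : Finset (Fin n)).filter (fun i : Fin n => ¬ ((i : ℕ) < a))).card = n - a := by
  have := Finset.card_filter_add_card_filter_not
    (s := (univ : Finset (Fin n))) (p := fun i : Fin n => (i : ℕ) < a)
  rw [card_filter_fin_lt h, Finset.card_univ, Fintype.card_fin] at this
  omega

lemma countP_projValues {n m : ℕ} (V : Fin n → Fin m → ℝ) (ph : ℕ → ℝ) (j : Fin m)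
    (p : ℝ → Prop) [DecidablePred p] :
    Multiset.countP p (projValues V ph j) =
      ((univ : Finset (Fin n)).filter (fun i => p (V i j))).card +
      ((Finset.range (n+1)).filter (fun k => p (ph k))).card := by
  rw [projValues, Multiset.countP_add, Multiset.countP_map, Multiset.countP_map]
  rfl

lemma card_projValues {n m : ℕ} (V : Fin n → Fin m → ℝ) (ph : ℕ → ℝ) (j : Fin m) :
    Multiset.card (projValues V ph j) = n + (n + 1) := by
  simp [projValues]; omega

lemma med_low {n a : ℕ} (han : a ≤ n) {V : Fin n → Fin 3 → ℝ} {j : Fin 3} {c t : ℝ}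
    (hc0 : 0 < c) (hc1 : c < 1) (ht : 0 ≤ t)
    (hV : ∀ i : Fin n, V i j = if (i : ℕ) < a then 0 else c) :
    phantomMedian V (fun k => min ((k : ℝ) * t) 1) j = min (((n - a : ℕ) : ℝ) * t) c := by
  set b := n - a with hbdef
  have hB0 : (0:ℝ) ≤ (b:ℝ) * t := mul_nonneg (Nat.cast_nonneg b) ht
  have hcard : n < Multiset.card (projValues V (fun k => min ((k : ℝ) * t) 1) j) := by
    rw [card_projValues]; omega
  rcases le_total c ((b:ℝ)*t) with hcb | hcb
  · -- median is c
    rw [min_eq_right hcb]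
    have ht' : 0 < t := by
      by_contra hc
      push_neg at hc
      nlinarith [mul_nonpos_of_nonneg_of_nonpos (Nat.cast_nonneg (α := ℝ) b) hc]
    apply medianAt_eq hcard
    · rw [countP_projValues]
      have hvote : ((univ : Finset (Fin n)).filter (fun i => V i j ≤ c)).card = n := by
        rw [Finset.filter_true_of_mem, Finset.card_univ, Fintype.card_fin]
        intro i _
        rw [hV i]
        by_cases hi : (i:ℕ) < a
        · rw [if_pos hi]; exact hc0.le
        · rw [if_neg hi]
      have hph : 1 ≤ ((Finset.range (n+1)).filter
          (fun k : ℕ => min ((k : ℝ) * t) 1 ≤ c)).card := by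
        refine Finset.card_pos.mpr ⟨0, ?_⟩
        rw [mem_filter, mem_range]
        refine ⟨by omega, ?_⟩
        simp [hc0.le]
      omega
    · rw [countP_projValues]
      have hvote : ((univ : Finset (Fin n)).filter (fun i => V i j < c)).card ≤ a := by
        rw [← card_filter_fin_lt han]
        apply Finset.card_le_card
        intro i hi
        rw [mem_filter] at *
        refine ⟨hi.1, ?_⟩
        by_contra hia
        have := hi.2
        rw [hV i, if_neg hia] at this
        exact lt_irrefl _ this
      have hph : ((Finset.range (n+1)).filter
          (fun k : ℕ => min ((k : ℝ) * t) 1 < c)).card ≤ b := by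
        refine le_trans (Finset.card_le_card (?_ : _ ⊆ Finset.range b)) (le_of_eq (Finset.card_range b))
        intro k hk
        rw [mem_filter] at hk
        rw [mem_range]
        have hkt : (k:ℝ) * t < c := by
          by_contra hx
          push_neg at hx
          exact absurd hk.2 (not_lt.mpr (le_min hx hc1.le))
        have : (k:ℝ) < b := lt_of_mul_lt_mul_right (lt_of_lt_of_le hkt hcb) ht
        exact_mod_cast this
      omega
  · -- median is b*t
    rw [min_eq_left hcb]
    apply medianAt_eq hcard
    · rw [countP_projValues]
      have hvote : a ≤ ((univ : Finset (Fin n)).filter (fun i => V i j ≤ (b:ℝ)*t)).card := by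
        rw [← card_filter_fin_lt han]
        apply Finset.card_le_card
        intro i hi
        rw [mem_filter] at *
        refine ⟨hi.1, ?_⟩
        rw [hV i, if_pos hi.2]
        exact hB0
      have hph : b + 1 ≤ ((Finset.range (n+1)).filter
          (fun k : ℕ => min ((k : ℝ) * t) 1 ≤ (b:ℝ)*t)).card := by
        refine le_trans (le_of_eq (Finset.card_range (b+1)).symm) (Finset.card_le_card ?_)
        intro k hk
        rw [mem_range] at hk
        rw [mem_filter, mem_range]
        refine ⟨by omega, ?_⟩
        refine le_trans (min_le_left _ _) ?_
        have : (k:ℝ) ≤ b := by exact_mod_cast Nat.lt_succ_iff.mp hk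
        exact mul_le_mul_of_nonneg_right this ht
      omega
    · rw [countP_projValues]
      have hvote : ((univ : Finset (Fin n)).filter (fun i => V i j < (b:ℝ)*t)).card ≤ a := by
        rw [← card_filter_fin_lt han]
        apply Finset.card_le_card
        intro i hi
        rw [mem_filter] at *
        refine ⟨hi.1, ?_⟩
        by_contra hia
        have := hi.2
        rw [hV i, if_neg hia] at this
        exact absurd this (not_lt.mpr hcb)
      have hph : ((Finset.range (n+1)).filter
          (fun k : ℕ => min ((k : ℝ) * t) 1 < (b:ℝ)*t)).card ≤ b := by
        refine le_trans (Finset.card_le_card (?_ : _ ⊆ Finset.range b)) (le_of_eq (Finset.card_range b))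
        intro k hk
        rw [mem_filter] at hk
        rw [mem_range]
        have hbt1 : (b:ℝ)*t ≤ 1 := le_trans hcb hc1.le
        have hkt : (k:ℝ) * t < (b:ℝ)*t := by
          by_contra hx
          push_neg at hx
          exact absurd hk.2 (not_lt.mpr (le_min hx hbt1))
        have : (k:ℝ) < b := lt_of_mul_lt_mul_right hkt ht
        exact_mod_cast this
      omega

lemma med_high_le {n a : ℕ} (han : a ≤ n) {V : Fin n → Fin 3 → ℝ} {j : Fin 3} {d t : ℝ}
    (ht : 0 ≤ t)
    (hV : ∀ i : Fin n, V i j = if (i : ℕ) < a then 1 else d) :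
    phantomMedian V (fun k => min ((k : ℝ) * t) 1) j ≤ max ((a:ℝ)*t) d := by
  apply medianAt_le
  rw [countP_projValues]
  have hvote : n - a ≤ ((univ : Finset (Fin n)).filter
      (fun i => V i j ≤ max ((a:ℝ)*t) d)).card := by
    rw [← card_filter_fin_not_lt han]
    apply Finset.card_le_card
    intro i hi
    rw [mem_filter] at *
    refine ⟨hi.1, ?_⟩
    rw [hV i, if_neg hi.2]
    exact le_max_right _ _
  have hph : a + 1 ≤ ((Finset.range (n+1)).filter
      (fun k : ℕ => min ((k : ℝ) * t) 1 ≤ max ((a:ℝ)*t) d)).card := by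
    refine le_trans (le_of_eq (Finset.card_range (a+1)).symm) (Finset.card_le_card ?_)
    intro k hk
    rw [mem_range] at hk
    rw [mem_filter, mem_range]
    refine ⟨by omega, ?_⟩
    have hka : (k:ℝ) ≤ a := by exact_mod_cast Nat.lt_succ_iff.mp hk
    rcases le_total ((a:ℝ)*t) 1 with h1 | h1
    · refine le_trans (min_le_left _ _) (le_trans ?_ (le_max_left _ _))
      exact mul_le_mul_of_nonneg_right hka ht
    · exact le_trans (min_le_right _ _) (le_trans h1 (le_max_left _ _))
  omega

set_option maxHeartbeats 2000000

/-- The Independent Markets mechanism is at least `0.6862`-approximate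
for three projects: for `n ≥ 2·10⁴`, on the concrete profile `imProfile n`, its loss
equals `(3 - 2√2)(1 - ⌈n(1-ρ)⌉/n) + ⌊nρ⌋/n` and is at least `0.6862`. -/
theorem independent_markets_lower_bound (n : ℕ) (hn : 2 * 10 ^ 4 ≤ n)
    (w : Fin 3 → ℝ) (hw : IsIMOutcome (imProfile n) w) :
    l1 w (propDiv (imProfile n)) =
      (3 - 2 * Real.sqrt 2) *
        (1 - (Nat.ceil ((n : ℝ) * (Real.sqrt 2 - 1)) : ℝ) / (n : ℝ))
      + (Nat.floor ((n : ℝ) * (2 - Real.sqrt 2)) : ℝ) / (n : ℝ) ∧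
    0.6862 ≤ l1 w (propDiv (imProfile n)) := by
  obtain ⟨t, ht0, hsum, hwj⟩ := hw
  have hn0 : 0 < n := by omega
  have hN : (0:ℝ) < n := by exact_mod_cast hn0
  have hN20 : (20000:ℝ) ≤ n := by exact_mod_cast hn
  set S := Real.sqrt 2 with hSdef
  have hS2 : S^2 = 2 := Real.sq_sqrt (by norm_num)
  have hS0 : 0 ≤ S := Real.sqrt_nonneg 2
  have hSl : (1.414213:ℝ) ≤ S := by nlinarith
  have hSu : S ≤ (1.4142136:ℝ) := by nlinarith
  set a := Nat.floor ((n:ℝ) * (2 - Real.sqrt 2)) with hadef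
  have hA0 : (0:ℝ) ≤ a := Nat.cast_nonneg a
  have haR : (a:ℝ) ≤ (n:ℝ)*(2-S) := Nat.floor_le (by nlinarith)
  have haR2 : (n:ℝ)*(2-S) < (a:ℝ) + 1 := Nat.lt_floor_add_one _
  have haN : (a:ℝ) < n := lt_of_le_of_lt haR (by nlinarith)
  have han : a ≤ n := le_of_lt (by exact_mod_cast haN)
  have hbR : ((n - a : ℕ):ℝ) = (n:ℝ) - a := by
    rw [Nat.cast_sub han]
  -- voter value descriptions
  have hV0 : ∀ i : Fin n, imProfile n i 0 = if (i:ℕ) < a then 1 else S - 1 := by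
    intro i; rw [imProfile]; norm_num; rw [← hadef, ← hSdef]
  have hV1 : ∀ i : Fin n, imProfile n i 1 = if (i:ℕ) < a then 0 else 1 - S/2 := by
    intro i; rw [imProfile]; norm_num; rw [← hadef, ← hSdef]
  have hV2 : ∀ i : Fin n, imProfile n i 2 = if (i:ℕ) < a then 0 else 1 - S/2 := by
    intro i; rw [imProfile]; norm_num; rw [← hadef, ← hSdef]
  have hc0 : (0:ℝ) < 1 - S/2 := by nlinarith
  have hc1 : (1:ℝ) - S/2 < 1 := by nlinarith
  have hmed1 : phantomMedian (imProfile n) (fun k => min ((k : ℝ) * t) 1) 1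
      = min (((n - a : ℕ) : ℝ) * t) (1 - S/2) := med_low han hc0 hc1 ht0 hV1
  have hmed2 : phantomMedian (imProfile n) (fun k => min ((k : ℝ) * t) 1) 2
      = min (((n - a : ℕ) : ℝ) * t) (1 - S/2) := med_low han hc0 hc1 ht0 hV2
  have hmed0le : phantomMedian (imProfile n) (fun k => min ((k : ℝ) * t) 1) 0
      ≤ max ((a:ℝ)*t) (S - 1) := med_high_le han ht0 hV0
  rw [Fin.sum_univ_three, hmed1, hmed2] at hsum
  set B : ℝ := ((n - a : ℕ) : ℝ) with hBdef
  have hB : B = (n:ℝ) - a := hbR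
  have hBpos : 0 < B := by rw [hB]; linarith
  have hBn : (n:ℝ)*(S-1) ≤ B := by rw [hB]; nlinarith
  -- rule out the case B*t < 1 - S/2
  have hge : 1 - S/2 ≤ B * t := by
    by_contra hlt
    push_neg at hlt
    have hμ : min (B * t) (1 - S/2) = B * t := min_eq_left hlt.le
    rw [hμ] at hsum
    have hm0 : phantomMedian (imProfile n) (fun k => min ((k : ℝ) * t) 1) 0
        = 1 - 2*(B*t) := by linarith
    rw [hm0] at hmed0le
    have hSm1 : S - 1 < 1 - 2*(B*t) := by nlinarith
    have hat : 1 - 2*(B*t) ≤ (a:ℝ)*t := by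
      rcases max_cases ((a:ℝ)*t) (S-1) with ⟨he, _⟩ | ⟨he, _⟩ <;> rw [he] at hmed0le <;> linarith
    have hA : (a:ℝ) = (n:ℝ) - B := by rw [hB]; ring
    have h1 : 1 ≤ ((n:ℝ) + B) * t := by nlinarith
    have h2 : ((n:ℝ) + B) * (B*t) < ((n:ℝ) + B) * (1 - S/2) :=
      mul_lt_mul_of_pos_left hlt (by linarith)
    have h3 : B * (((n:ℝ) + B) * t) ≥ B := by nlinarith
    nlinarith [hS2, hBn, hN20, hSl, hSu]
  have hμ : min (B * t) (1 - S/2) = 1 - S/2 := min_eq_right hge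
  rw [hμ] at hsum
  have hm0 : phantomMedian (imProfile n) (fun k => min ((k : ℝ) * t) 1) 0 = S - 1 := by
    linarith
  have hw0 : w 0 = S - 1 := by rw [hwj 0, hm0]
  have hw1 : w 1 = 1 - S/2 := by rw [hwj 1, hmed1, hμ]
  have hw2 : w 2 = 1 - S/2 := by rw [hwj 2, hmed2, hμ]
  -- proportional division
  have hsum_if : ∀ x y : ℝ, ∑ i : Fin n, (if (i:ℕ) < a then x else y)
      = (a:ℝ) * x + ((n:ℝ) - a) * y := by
    intro x y
    rw [Finset.sum_ite]
    rw [Finset.sum_const, Finset.sum_const, card_filter_fin_lt han, card_filter_fin_not_lt han]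
    rw [nsmul_eq_mul, nsmul_eq_mul, Nat.cast_sub han]
  have hp0 : propDiv (imProfile n) 0 = ((a:ℝ) * 1 + ((n:ℝ) - a) * (S-1)) / n := by
    rw [propDiv]
    congr 1
    rw [Finset.sum_congr rfl (fun i _ => hV0 i), hsum_if]
  have hp1 : propDiv (imProfile n) 1 = ((a:ℝ) * 0 + ((n:ℝ) - a) * (1-S/2)) / n := by
    rw [propDiv]
    congr 1
    rw [Finset.sum_congr rfl (fun i _ => hV1 i), hsum_if]
  have hp2 : propDiv (imProfile n) 2 = ((a:ℝ) * 0 + ((n:ℝ) - a) * (1-S/2)) / n := by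
    rw [propDiv]
    congr 1
    rw [Finset.sum_congr rfl (fun i _ => hV2 i), hsum_if]
  have hl1 : l1 w (propDiv (imProfile n)) = (4 - 2*S) * (a:ℝ) / n := by
    rw [l1, Fin.sum_univ_three, hw0, hw1, hw2, hp0, hp1, hp2]
    have e0 : S - 1 - ((a:ℝ) * 1 + ((n:ℝ) - a) * (S-1)) / n = -((a:ℝ)*(2-S)/n) := by
      field_simp; ring
    have e1 : 1 - S/2 - ((a:ℝ) * 0 + ((n:ℝ) - a) * (1-S/2)) / n = (a:ℝ)*(1-S/2)/n := by
      field_simp; ring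
    rw [e0, e1, abs_neg, abs_of_nonneg, abs_of_nonneg]
    · field_simp; ring
    · apply div_nonneg (mul_nonneg hA0 (by nlinarith)) hN.le
    · apply div_nonneg (mul_nonneg hA0 (by nlinarith)) hN.le
  have hceil : (Nat.ceil ((n:ℝ) * (S - 1)) : ℝ) = (n:ℝ) - a := by
    have hanlt : a < n := by exact_mod_cast haN
    have hc2 : ((n - a : ℕ):ℝ) = (n:ℝ) - a := Nat.cast_sub han
    have hc3 : ((n - a - 1 : ℕ):ℝ) = (n:ℝ) - a - 1 := by
      rw [Nat.cast_sub (by omega : 1 ≤ n - a), hc2]; norm_num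
    have hkey : Nat.ceil ((n:ℝ) * (S - 1)) = n - a := by
      rw [Nat.ceil_eq_iff (by omega : n - a ≠ 0)]
      constructor
      · rw [hc3]; nlinarith
      · rw [hc2]; nlinarith
    rw [hkey, hc2]
  have hrhs : (3 - 2 * S) * (1 - (Nat.ceil ((n : ℝ) * (S - 1)) : ℝ) / (n : ℝ))
      + (a : ℝ) / (n : ℝ) = (4 - 2*S) * (a:ℝ) / n := by
    rw [hceil]
    field_simp
    ring
  constructor
  · rw [hl1, hrhs]
  · rw [hl1]
    rw [le_div_iff₀ hN]
    have hgap : (4 - 2*S) * ((n:ℝ)*(2-S) - 1) ≤ (4 - 2*S) * (a:ℝ) := by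
      apply mul_le_mul_of_nonneg_left (by linarith) (by nlinarith)
    nlinarith [mul_nonneg (by linarith : (0:ℝ) ≤ 1.4142136 - S) (by linarith : (0:ℝ) ≤ (n:ℝ) - 20000), hS2]
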